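/- Define on the free ℚ[q]-module with basis ⊔_{n≥0} ℕ^n the multiplication μ * ν = ∑_{a∈ℕ^m, b∈ℕ^n} c_{m,n}^{a,b} · (μ+a, ν+b) for μ ∈ ℕ^m, ν ∈ ℕ^n (with the empty vector acting as identity), where c_{m,n}^{a,b} is the coefficient of x^{(a,b)} in ∏_{s=m+1}^{m+n} ∏_{t=1}^{m} (x_s - q·x_t)^{d-1} and (μ+a, ν+b) denotes concatenation of componentwise sums. Then this multiplication is associative: (μ*ν)*w = μ*(ν*w) for all μ, ν, w. -/

import Mathlib

open MvPolynomial Finset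

noncomputable section

/-- The quantization variable `q` in `ℚ[q]`. -/
def qv : Polynomial ℚ := Polynomial.X

/-- The kernel polynomial `g_{m,n} = ∏_{s=m+1}^{m+n} ∏_{t=1}^{m} (x_s - q x_t)^{d-1}`,
with variables indexed by `ℕ` (indices `0,…,m-1` for the first group and
`m,…,m+n-1` for the second).  Its coefficients are the `c_{m,n}^{a,b}`. -/
def gPoly (d m n : ℕ) : MvPolynomial ℕ (Polynomial ℚ) :=
  ∏ s ∈ Finset.Ico m (m + n), ∏ t ∈ Finset.range m, (X s - C qv * X t) ^ (d - 1)

/-- `Λ̂`, the disjoint union of all `ℕ^n` for `n ≥ 0`. -/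
def LambdaHat : Type := Σ n : ℕ, (Fin n → ℕ)

/-- The product of two basis elements of `𝔸^d_q(Λ̂)`:
`μ * ν = ∑_{a ∈ ℕ^m, b ∈ ℕ^n} c_{m,n}^{a,b} (μ+a, ν+b)`.
(The sum is realised as a sum over the monomials `e` in the support of `g_{m,n}`,
with `a i = e i` and `b j = e (m+j)`; all other coefficients `c_{m,n}^{a,b}` vanish.) -/
def basisMul (d : ℕ) (μ ν : LambdaHat) : LambdaHat →₀ Polynomial ℚ :=
  ∑ e ∈ (gPoly d μ.1 ν.1).support,
    Finsupp.single
      ⟨μ.1 + ν.1, Fin.append (fun i => μ.2 i + e (i : ℕ)) (fun j => ν.2 j + e (μ.1 + (j : ℕ)))⟩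
      (MvPolynomial.coeff e (gPoly d μ.1 ν.1))

/-- The bilinear extension of `basisMul` to the free `ℚ[q]`-module `𝔸^d_q(Λ̂)`. -/
def amul (d : ℕ) (f g : LambdaHat →₀ Polynomial ℚ) : LambdaHat →₀ Polynomial ℚ :=
  ∑ μ ∈ f.support, ∑ ν ∈ g.support, (f μ * g ν) • basisMul d μ ν

/-! ### Auxiliary lemmas -/

lemma amul_def (d : ℕ) (f g : LambdaHat →₀ Polynomial ℚ) :
    amul d f g = f.sum fun μ c => g.sum fun ν c' => (c * c') • basisMul d μ ν := rfl

lemma amul_single_one_left (d : ℕ) (μ : LambdaHat) (g : LambdaHat →₀ Polynomial ℚ) :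
    amul d (Finsupp.single μ 1) g = g.sum fun ν c' => c' • basisMul d μ ν := by
  rw [amul_def, Finsupp.sum_single_index]
  · simp
  · simp [Finsupp.sum]

lemma amul_single_one_right (d : ℕ) (f : LambdaHat →₀ Polynomial ℚ) (w : LambdaHat) :
    amul d f (Finsupp.single w 1) = f.sum fun μ c => c • basisMul d μ w := by
  rw [amul_def]
  refine Finsupp.sum_congr fun μ _ => ?_
  rw [Finsupp.sum_single_index] <;> simp

lemma amul_single_single (d : ℕ) (μ ν : LambdaHat) :
    amul d (Finsupp.single μ 1) (Finsupp.single ν 1) = basisMul d μ ν := by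
  rw [amul_single_one_left, Finsupp.sum_single_index] <;> simp

/-! ### Support bound -/

lemma gPoly_mem_supported (d m n : ℕ) :
    gPoly d m n ∈ MvPolynomial.supported (Polynomial ℚ) (Set.Iio (m+n)) := by
  apply Subalgebra.prod_mem; intro s hs; apply Subalgebra.prod_mem; intro t ht
  apply Subalgebra.pow_mem; apply Subalgebra.sub_mem
  · exact X_mem_supported.2 (by simp only [Finset.mem_Ico] at hs; simp; omega)
  · apply Subalgebra.mul_mem
    · exact Subalgebra.algebraMap_mem _ qv
    · exact X_mem_supported.2 (by simp only [Finset.mem_range] at ht; simp; omega)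

lemma gPoly_supp_bound {d m n : ℕ} {e : ℕ →₀ ℕ} (he : e ∈ (gPoly d m n).support)
    {i : ℕ} (hi : m + n ≤ i) : e i = 0 := by
  by_contra h
  have h1 : i ∈ (gPoly d m n).vars := (mem_vars i).2 ⟨e, he, Finsupp.mem_support_iff.2 h⟩
  have h2 := MvPolynomial.mem_supported.1 (gPoly_mem_supported d m n) (Finset.mem_coe.2 h1)
  simp only [Set.mem_Iio] at h2; omega

/-! ### The polynomial identity -/

lemma Ico_map_add (a b c : ℕ) :
    Finset.Ico (c+a) (c+b) = (Finset.Ico a b).map (addLeftEmbedding c) :=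
  (Finset.map_add_left_Ico a b c).symm

lemma rename_gPoly (d m n p : ℕ) :
    rename (fun j => m + j) (gPoly d n p)
      = ∏ s ∈ Finset.Ico (m+n) (m+n+p), ∏ t ∈ Finset.Ico m (m+n),
          (X s - C qv * X t : MvPolynomial ℕ (Polynomial ℚ)) ^ (d - 1) := by
  rw [gPoly, map_prod,
    show Finset.Ico (m+n) (m+n+p) = Finset.Ico (m+n) (m+(n+p)) by rw [Nat.add_assoc],
    Ico_map_add, Finset.prod_map]
  refine Finset.prod_congr rfl fun s _ => ?_
  rw [map_prod, ← Nat.Ico_zero_eq_range,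
    show Finset.Ico m (m+n) = Finset.Ico (m+0) (m+n) by rw [Nat.add_zero],
    Ico_map_add, Finset.prod_map]
  refine Finset.prod_congr rfl fun t _ => ?_
  simp [addLeftEmbedding_apply]

lemma key_poly (d m n p : ℕ) :
    gPoly d m n * gPoly d (m+n) p
      = rename (fun j => m + j) (gPoly d n p) * gPoly d m (n+p) := by
  rw [rename_gPoly]
  unfold gPoly
  simp only [← Nat.Ico_zero_eq_range]
  rw [show m+(n+p) = m+n+p from (Nat.add_assoc m n p).symm]
  rw [← Finset.prod_Ico_consecutive
      (fun s => ∏ t ∈ Finset.Ico 0 m, (X s - C qv * X t : MvPolynomial ℕ (Polynomial ℚ)) ^ (d-1))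
      (Nat.le_add_right m n) (by omega : m + n ≤ m + n + p)]
  rw [show (∏ s ∈ Finset.Ico (m+n) (m+n+p), ∏ t ∈ Finset.Ico 0 (m+n),
        (X s - C qv * X t : MvPolynomial ℕ (Polynomial ℚ)) ^ (d-1))
      = ∏ s ∈ Finset.Ico (m+n) (m+n+p),
        ((∏ t ∈ Finset.Ico 0 m, (X s - C qv * X t) ^ (d-1)) *
         ∏ t ∈ Finset.Ico m (m+n), (X s - C qv * X t) ^ (d-1))
      from Finset.prod_congr rfl fun s _ =>
        (Finset.prod_Ico_consecutive _ (Nat.zero_le m) (Nat.le_add_right m n)).symm]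
  rw [Finset.prod_mul_distrib]
  ring

/-! ### mapDomain presentation -/

def keyFun (N : ℕ) (v : Fin N → ℕ) (e : ℕ →₀ ℕ) : LambdaHat := ⟨N, fun i => v i + e (i : ℕ)⟩

lemma mapDomain_mul (K : (ℕ →₀ ℕ) → LambdaHat) (P Q : MvPolynomial ℕ (Polynomial ℚ)) :
    Finsupp.mapDomain K (AddMonoidAlgebra.coeff (P * Q))
      = ∑ e ∈ P.support, ∑ f ∈ Q.support,
          Finsupp.single (K (e + f)) (coeff e P * coeff f Q) := by
  rw [AddMonoidAlgebra.mul_def]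
  simp only [Finsupp.sum, AddMonoidAlgebra.coeff_sum, AddMonoidAlgebra.coeff_single]
  rw [Finsupp.mapDomain_finset_sum]
  refine Finset.sum_congr rfl fun e _ => ?_
  rw [Finsupp.mapDomain_finset_sum]
  refine Finset.sum_congr rfl fun f _ => ?_
  exact Finsupp.mapDomain_single

lemma basisMul_eq (d : ℕ) (μ ν : LambdaHat) :
    basisMul d μ ν
      = Finsupp.mapDomain (keyFun (μ.1 + ν.1) (Fin.append μ.2 ν.2)) (AddMonoidAlgebra.coeff (gPoly d μ.1 ν.1)) := by
  rw [basisMul, Finsupp.mapDomain, Finsupp.sum]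
  refine Finset.sum_congr rfl fun e he => ?_
  refine congrArg (fun x => Finsupp.single x _) ?_
  refine congrArg (Sigma.mk (μ.1 + ν.1)) (funext fun i => ?_)
  refine Fin.addCases (fun i0 => ?_) (fun j => ?_) i
  · simp [Fin.append_left, keyFun]
  · simp [Fin.append_right, keyFun]

lemma key_lhs {m n p : ℕ} (B : Fin (m+n) → ℕ) (wf : Fin p → ℕ) (e f : ℕ →₀ ℕ)
    (hE : ∀ i, m + n ≤ i → e i = 0) :
    keyFun (m+n+p) (Fin.append (fun i => B i + e (i : ℕ)) wf) f
      = keyFun (m+n+p) (Fin.append B wf) (e + f) := by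
  refine congrArg (Sigma.mk (m+n+p)) (funext fun i => ?_)
  refine Fin.addCases (fun i0 => ?_) (fun j => ?_) i
  · simp only [Fin.append_left, Finsupp.add_apply, Fin.coe_castAdd]
    omega
  · simp only [Fin.append_right, Finsupp.add_apply, Fin.coe_natAdd]
    rw [hE (m+n+j) (by omega)]
    omega

lemma key_rhs {m n p : ℕ} (μf : Fin m → ℕ) (Bv : Fin (n+p) → ℕ) (e f : ℕ →₀ ℕ) :
    keyFun (m+(n+p)) (Fin.append μf (fun j => Bv j + e (j : ℕ))) f
      = keyFun (m+(n+p)) (Fin.append μf Bv)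
          (Finsupp.mapDomain (fun j => m + j) e + f) := by
  have hσ : Function.Injective (fun j => m + j : ℕ → ℕ) := fun a b h => Nat.add_left_cancel h
  refine congrArg (Sigma.mk (m+(n+p))) (funext fun i => ?_)
  refine Fin.addCases (fun i0 => ?_) (fun j => ?_) i
  · simp only [Fin.append_left, Finsupp.add_apply, Fin.coe_castAdd]
    rw [Finsupp.mapDomain_notin_range]
    · omega
    · rintro ⟨a, ha⟩; simp at ha; omega
  · simp only [Fin.append_right, Finsupp.add_apply, Fin.coe_natAdd]
    rw [Finsupp.mapDomain_apply hσ]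
    omega

lemma lhs_eq (d m n p : ℕ) (μf : Fin m → ℕ) (νf : Fin n → ℕ) (wf : Fin p → ℕ) :
    ((basisMul d ⟨m, μf⟩ ⟨n, νf⟩).sum fun μ' c => c • basisMul d μ' ⟨p, wf⟩)
      = Finsupp.mapDomain (keyFun (m+n+p) (Fin.append (Fin.append μf νf) wf))
          (AddMonoidAlgebra.coeff (gPoly d m n * gPoly d (m+n) p)) := by
  rw [basisMul_eq d ⟨m, μf⟩ ⟨n, νf⟩]
  rw [Finsupp.sum_mapDomain_index (by simp) (fun b c₁ c₂ => by rw [add_smul])]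
  rw [mapDomain_mul]
  rw [Finsupp.sum]
  refine Finset.sum_congr rfl fun e he => ?_
  rw [basisMul_eq d _ ⟨p, wf⟩]
  rw [Finsupp.mapDomain, Finsupp.sum, Finset.smul_sum]
  refine Finset.sum_congr rfl fun f hf => ?_
  rw [Finsupp.smul_single]
  have hkey := key_lhs (Fin.append μf νf) wf e f (fun i hi => gPoly_supp_bound he hi)
  refine congrArg₂ Finsupp.single ?_ rfl
  exact hkey

lemma rhs_eq (d m n p : ℕ) (μf : Fin m → ℕ) (νf : Fin n → ℕ) (wf : Fin p → ℕ) :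
    ((basisMul d ⟨n, νf⟩ ⟨p, wf⟩).sum fun ν' c => c • basisMul d ⟨m, μf⟩ ν')
      = Finsupp.mapDomain (keyFun (m+(n+p)) (Fin.append μf (Fin.append νf wf)))
          (AddMonoidAlgebra.coeff (rename (fun j => m + j) (gPoly d n p) * gPoly d m (n+p))) := by
  classical
  have hσ : Function.Injective (fun j => m + j : ℕ → ℕ) := fun a b h => Nat.add_left_cancel h
  rw [basisMul_eq d ⟨n, νf⟩ ⟨p, wf⟩]
  rw [Finsupp.sum_mapDomain_index (by simp) (fun b c₁ c₂ => by rw [add_smul])]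
  rw [mapDomain_mul]
  rw [support_rename_of_injective hσ, Finset.sum_image
    (fun a _ b _ h => Finsupp.mapDomain_injective hσ h)]
  rw [Finsupp.sum]
  refine Finset.sum_congr rfl fun e he => ?_
  rw [basisMul_eq d ⟨m, μf⟩ _]
  rw [Finsupp.mapDomain, Finsupp.sum, Finset.smul_sum]
  refine Finset.sum_congr rfl fun f hf => ?_
  rw [Finsupp.smul_single]
  refine congrArg₂ Finsupp.single ?_ ?_
  · exact key_rhs μf (Fin.append νf wf) e f
  · rw [coeff_rename_mapDomain _ hσ]
    rfl

lemma LambdaHat.mk_eq {N N' : ℕ} (h : N = N') (F : Fin N → ℕ) (G : Fin N' → ℕ)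
    (hFG : ∀ i : Fin N, F i = G (Fin.cast h i)) : (⟨N, F⟩ : LambdaHat) = ⟨N', G⟩ := by
  subst h
  exact congrArg _ (funext fun i => by simpa [Fin.cast] using hFG i)

lemma keyFun_assoc (m n p : ℕ) (μf : Fin m → ℕ) (νf : Fin n → ℕ) (wf : Fin p → ℕ) :
    keyFun (m+n+p) (Fin.append (Fin.append μf νf) wf)
      = keyFun (m+(n+p)) (Fin.append μf (Fin.append νf wf)) := by
  funext e
  refine LambdaHat.mk_eq (Nat.add_assoc m n p) _ _ fun i => ?_
  have hap := congrFun (Fin.append_assoc μf νf wf) i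
  rw [Function.comp_apply] at hap
  rw [hap]
  simp [Fin.coe_cast]

/-- The multiplication of `𝔸^d_q(Λ̂)` is associative: `(μ*ν)*w = μ*(ν*w)`. -/
theorem amul_assoc (d : ℕ) (hd : 0 < d) (μ ν w : LambdaHat) :
    amul d (amul d (Finsupp.single μ 1) (Finsupp.single ν 1)) (Finsupp.single w 1)
      = amul d (Finsupp.single μ 1) (amul d (Finsupp.single ν 1) (Finsupp.single w 1)) := by
  rw [amul_single_single, amul_single_single, amul_single_one_right, amul_single_one_left]
  obtain ⟨m, μf⟩ := μ
  obtain ⟨n, νf⟩ := ν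
  obtain ⟨p, wf⟩ := w
  rw [lhs_eq, rhs_eq, key_poly, keyFun_assoc]

end
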